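/- Let α ∈ (0,1), let m be a natural number, set p = 2m+1, let Δt > 0, set t_k = kΔt for k ≥ 0, and let n ≥ 2 be an integer. Then Σ_{k=1}^{n−1} ∫_{t_{k−1}}^{t_k} (t − t_{k−1})^{m+1} (t_k − t)^{m+1} · α (t_n − t)^{−α−1} dt ≤ (Δt^{p+1} / 2^{p+1}) · (Δt^{−α} − t_n^{−α}) ≤ (1 / 2^{p+1}) · Δt^{p+1−α}. -/

import Mathlib

/-- Bound for the contribution of the interior grid intervals in the error analysis of the
Hermite interpolation explicit approximation of the Caputo fractional derivative. -/
theorem stmt_3 (α : ℝ) (hα : α ∈ Set.Ioo (0:ℝ) 1) (m p : ℕ) (hp : p = 2*m+1)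
    (Δt : ℝ) (hΔt : 0 < Δt) (tk : ℕ → ℝ) (htk : ∀ k, tk k = k * Δt)
    (n : ℕ) (hn : 2 ≤ n) :
    (∑ k ∈ Finset.Icc 1 (n-1), ∫ t in (tk (k-1))..(tk k),
        (t - tk (k-1)) ^ (m+1) * (tk k - t) ^ (m+1) * (α * (tk n - t) ^ (-α-1)))
      ≤ Δt ^ (p+1) / 2 ^ (p+1) * (Δt ^ (-α) - (tk n) ^ (-α)) ∧
    Δt ^ (p+1) / 2 ^ (p+1) * (Δt ^ (-α) - (tk n) ^ (-α))
      ≤ (1 / 2 ^ (p+1)) * Δt ^ ((p:ℝ)+1-α) := by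
  obtain ⟨hα0, hα1⟩ := hα
  set h : ℝ → ℝ := fun t => α * (tk n - t) ^ (-α-1) with hh
  have hmono : ∀ j k : ℕ, j ≤ k → tk j ≤ tk k := by
    intro j k hjk
    rw [htk, htk]
    have : (j:ℝ) ≤ (k:ℝ) := by exact_mod_cast hjk
    nlinarith
  have hstep : ∀ j : ℕ, tk (j+1) - tk j = Δt := by
    intro j; rw [htk, htk]; push_cast; ring
  have htn : ∀ t, t ≤ tk (n-1) → Δt ≤ tk n - t := by
    intro t ht
    have h1 : tk (n-1) + Δt = tk n := by
      have h2 := hstep (n-1)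
      have h3 : n - 1 + 1 = n := by omega
      rw [h3] at h2; linarith
    linarith
  have hcont : ContinuousOn h (Set.Iio (tk n)) := by
    apply ContinuousOn.mul continuousOn_const
    apply ContinuousOn.rpow_const (continuousOn_const.sub continuousOn_id)
    intro x hx
    exact Or.inl (sub_ne_zero_of_ne (ne_of_gt hx))
  have hIcc_sub : ∀ b : ℝ, b ≤ tk (n-1) → ∀ a : ℝ, a ≤ b → Set.uIcc a b ⊆ Set.Iio (tk n) := by
    intro b hb a hab x hx
    rw [Set.uIcc_of_le hab] at hx
    have h1 : x ≤ tk (n-1) := le_trans hx.2 hb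
    have := htn x h1
    simp only [Set.mem_Iio]; linarith
  have hInt : ∀ a b : ℝ, a ≤ b → b ≤ tk (n-1) → IntervalIntegrable h MeasureTheory.volume a b := by
    intro a b hab hb
    exact (hcont.mono (hIcc_sub b hb a hab)).intervalIntegrable
  constructor
  · -- first inequality
    rw [← Finset.Ico_add_one_right_eq_Icc, Finset.sum_Ico_eq_sum_range]
    have hidx : n - 1 + 1 - 1 = n - 1 := by omega
    rw [hidx]
    have hterm : ∀ i, (∫ t in (tk (1 + i - 1))..(tk (1 + i)),
          (t - tk (1 + i - 1)) ^ (m+1) * (tk (1 + i) - t) ^ (m+1) * h t)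
        = ∫ t in (tk i)..(tk (i+1)),
          (t - tk i) ^ (m+1) * (tk (i+1) - t) ^ (m+1) * h t := by
      intro i
      have h1 : 1 + i - 1 = i := by omega
      rw [h1, add_comm 1 i]
    show ∑ k ∈ Finset.range (n - 1), ∫ t in (tk (1 + k - 1))..(tk (1 + k)),
        (t - tk (1 + k - 1)) ^ (m+1) * (tk (1 + k) - t) ^ (m+1) * h t ≤ _
    simp only [hterm]
    have key : ∀ j ∈ Finset.range (n-1),
        (∫ t in (tk j)..(tk (j+1)), (t - tk j) ^ (m+1) * (tk (j+1) - t) ^ (m+1) * h t)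
        ≤ ∫ t in (tk j)..(tk (j+1)), (Δt/2)^(p+1) * h t := by
      intro j hj
      have hj' : j + 1 ≤ n - 1 := by simp at hj; omega
      have hab : tk j ≤ tk (j+1) := hmono _ _ (Nat.le_succ j)
      have hb : tk (j+1) ≤ tk (n-1) := hmono _ _ hj'
      apply intervalIntegral.integral_mono_on hab
      · apply ContinuousOn.intervalIntegrable
        apply ContinuousOn.mul
        · exact (Continuous.continuousOn (by continuity))
        · exact hcont.mono (hIcc_sub _ hb _ hab)
      · exact (hInt _ _ hab hb).const_mul _
      · intro t ht
        have h1 : 0 ≤ t - tk j := by linarith [ht.1]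
        have h2 : 0 ≤ tk (j+1) - t := by linarith [ht.2]
        have hprod : (t - tk j) * (tk (j+1) - t) ≤ (Δt/2)^2 := by
          have hs := hstep j
          nlinarith [sq_nonneg (tk j + tk (j+1) - 2*t)]
        have hpow : (t - tk j) ^ (m+1) * (tk (j+1) - t) ^ (m+1) ≤ (Δt/2)^(p+1) := by
          rw [← mul_pow]
          calc ((t - tk j) * (tk (j+1) - t)) ^ (m+1) ≤ ((Δt/2)^2) ^ (m+1) :=
                pow_le_pow_left₀ (mul_nonneg h1 h2) hprod _
            _ = (Δt/2)^(p+1) := by rw [← pow_mul]; congr 1; omega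
        have hhnn : 0 ≤ h t := by
          have h3 : (0:ℝ) ≤ tk n - t := by
            have := htn t (le_trans ht.2 hb); linarith
          exact mul_nonneg hα0.le (Real.rpow_nonneg h3 _)
        exact mul_le_mul_of_nonneg_right hpow hhnn
    have heval : (∫ t in (tk 0)..(tk (n-1)), h t) = Δt ^ (-α) - (tk n) ^ (-α) := by
      have h0n : tk 0 ≤ tk (n-1) := hmono _ _ (by omega)
      have hftc := intervalIntegral.integral_eq_sub_of_hasDerivAt
        (f := fun t => (tk n - t) ^ (-α)) (f' := h)
        (a := tk 0) (b := tk (n-1)) ?_ (hInt _ _ h0n le_rfl)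
      · rw [hftc]
        have e1 : tk n - tk (n-1) = Δt := by
          have := htn (tk (n-1)) le_rfl
          have h2 := hstep (n-1)
          have h3 : n - 1 + 1 = n := by omega
          rw [h3] at h2; linarith
        have e2 : tk 0 = 0 := by rw [htk]; simp
        simp only [e1, e2, sub_zero]
      · intro x hx
        rw [Set.uIcc_of_le h0n] at hx
        have hxn : tk n - x ≠ 0 := by
          have := htn x hx.2; intro hc; rw [hc] at this; linarith
        have d1 : HasDerivAt (fun y : ℝ => tk n - y) (-1) x :=
          (hasDerivAt_id x).const_sub (tk n)
        have d2 := d1.rpow_const (p := -α) (Or.inl hxn)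
        have e : h x = -1 * -α * (tk n - x) ^ (-α - 1) := by simp [hh]
        rw [e]; exact d2
    calc ∑ j ∈ Finset.range (n-1), ∫ t in (tk j)..(tk (j+1)),
            (t - tk j) ^ (m+1) * (tk (j+1) - t) ^ (m+1) * h t
        ≤ ∑ j ∈ Finset.range (n-1), ∫ t in (tk j)..(tk (j+1)), (Δt/2)^(p+1) * h t :=
          Finset.sum_le_sum key
      _ = ∫ t in (tk 0)..(tk (n-1)), (Δt/2)^(p+1) * h t := by
          apply intervalIntegral.sum_integral_adjacent_intervals
          intro j hj
          exact ((hInt _ _ (hmono _ _ (Nat.le_succ j)) (hmono _ _ (by omega))).const_mul _)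
      _ = (Δt/2)^(p+1) * ∫ t in (tk 0)..(tk (n-1)), h t :=
          intervalIntegral.integral_const_mul _ _
      _ = Δt ^ (p+1) / 2 ^ (p+1) * (Δt ^ (-α) - (tk n) ^ (-α)) := by
          rw [heval, div_pow]
  · -- second inequality
    have htnn : (0:ℝ) ≤ (tk n) ^ (-α) := by
      apply Real.rpow_nonneg
      rw [htk]; positivity
    have hpow : Δt ^ (p+1) * Δt ^ (-α) = Δt ^ ((p:ℝ)+1-α) := by
      rw [← Real.rpow_natCast Δt (p+1), ← Real.rpow_add hΔt]
      congr 1; push_cast; ring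
    have h2p : (0:ℝ) < 2 ^ (p+1) := by positivity
    rw [div_mul_eq_mul_div, mul_sub, sub_div]
    have h1 : Δt ^ (p+1) * Δt ^ (-α) / 2 ^ (p+1) = 1 / 2 ^ (p+1) * Δt ^ ((p:ℝ)+1-α) := by
      rw [hpow]; ring
    rw [h1]
    have h2 : 0 ≤ Δt ^ (p+1) * (tk n) ^ (-α) / 2 ^ (p+1) := by positivity
    linarith
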